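/- Let μ and ν be absolutely continuous probability measures on ℝ^d with positive densities f and g respectively, and let Q = ∇ψ be the gradient of a convex function ψ pushing μ forward to ν. Define ρ_Q(A) := Lebesgue measure of Q(A) for Borel sets A. Then ρ_Q satisfies the Monge-Ampère equation ρ_Q(A) = ∫_A f(x)/g(Q(x)) dx for every Borel set A. -/

import Mathlib

open scoped RealInnerProductSpace
open Filter

noncomputable section

abbrev E (d : ℕ) : Type := EuclideanSpace ℝ (Fin d)

/-- Subdifferential of a real-valued function at a point. -/
def subdiffR {d : ℕ} (f : E d → ℝ) (x : E d) : Set (E d) :=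
  {ξ | ∀ y : E d, f x + ⟪ξ, y - x⟫ ≤ f y}

/-- Subdifferential of an `EReal`-valued function at a point. -/
def subdiffE {d : ℕ} (f : E d → EReal) (x : E d) : Set (E d) :=
  {ξ | ∀ y : E d, f x + ((⟪ξ, y - x⟫ : ℝ) : EReal) ≤ f y}

/-- Convexity of an `EReal`-valued function. -/
def ConvexE {d : ℕ} (f : E d → EReal) : Prop :=
  ∀ x y : E d, ∀ a b : ℝ, 0 ≤ a → 0 ≤ b → a + b = 1 →
    f (a • x + b • y) ≤ (a : EReal) * f x + (b : EReal) * f y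
open scoped ENNReal
open Filter MeasureTheory Metric Set Topology

namespace MA

variable {d : ℕ}

/-- directional derivative identification from a subgradient inequality -/
lemma grad_eq {F : E d → ℝ} {p x : E d} {ε : ℝ} (hε : 0 < ε)
    (hx : ∀ q ∈ ball p ε, F p + ⟪x, q - p⟫ ≤ F q)
    (hF : DifferentiableAt ℝ F p) (v : E d) : fderiv ℝ F p v = ⟪x, v⟫ := by
  have hline : HasDerivAt (fun t : ℝ => F (p + t • v)) (fderiv ℝ F p v) 0 := by
    have h1 : HasDerivAt (fun t : ℝ => p + t • v) v 0 := by
      simpa using ((hasDerivAt_id (0 : ℝ)).smul_const v).const_add p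
    have hF' : HasFDerivAt F (fderiv ℝ F p) (p + (0:ℝ) • v) := by
      simpa using hF.hasFDerivAt
    have h2 := hF'.comp_hasDerivAt (x := (0:ℝ)) h1
    exact h2
  set c : ℝ := ⟪x, v⟫ with hc
  have hmin : IsLocalMin (fun t : ℝ => F (p + t • v) - (F p + t * c)) 0 := by
    have hcont : Continuous fun t : ℝ => p + t • v := by fun_prop
    have hev : ∀ᶠ t : ℝ in 𝓝 0, p + t • v ∈ ball p ε := by
      have h0 : (fun t : ℝ => p + t • v) 0 = p := by simp
      have h5 := hcont.continuousAt (x := (0:ℝ))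
      rw [ContinuousAt] at h5
      rw [show ((0:ℝ) • v) = 0 from zero_smul ℝ v, add_zero] at h5
      exact h5 (ball_mem_nhds p hε)
    filter_upwards [hev] with t ht
    have h3 := hx _ ht
    have h4 : ⟪x, (p + t • v) - p⟫ = t * c := by
      rw [hc]; rw [show (p + t • v) - p = t • v by abel]; exact real_inner_smul_right x v t
    simp only [zero_smul, add_zero, zero_mul, sub_self]
    rw [h4] at h3
    linarith
  have hd : HasDerivAt (fun t : ℝ => F (p + t • v) - (F p + t * c)) (fderiv ℝ F p v - c) 0 := by
    have h5 : HasDerivAt (fun t : ℝ => F p + t * c) c 0 := by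
      simpa using ((hasDerivAt_id (0:ℝ)).mul_const c).const_add (F p)
    exact hline.sub h5
  have := hmin.hasDerivAt_eq_zero hd
  linarith

lemma grad_unique {F : E d → ℝ} {p x y : E d} {ε : ℝ} (hε : 0 < ε)
    (hx : ∀ q ∈ ball p ε, F p + ⟪x, q - p⟫ ≤ F q)
    (hy : ∀ q ∈ ball p ε, F p + ⟪y, q - p⟫ ≤ F q)
    (hF : DifferentiableAt ℝ F p) : x = y := by
  have h : ∀ v, ⟪x, v⟫ = (⟪y, v⟫ : ℝ) := fun v => by
    rw [← grad_eq hε hx hF v, grad_eq hε hy hF v]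
  have h2 : ⟪x - y, x - y⟫ = (0:ℝ) := by
    have := h (x - y)
    rw [inner_sub_left]
    linarith
  have h3 : x - y = 0 := inner_self_eq_zero.mp h2
  have := sub_eq_zero.mp h3
  exact this

/-- convex conjugate of a real function, `EReal`-valued -/
def conjFn (φ : E d → ℝ) (p : E d) : EReal := ⨆ y : E d, ((⟪p, y⟫ - φ y : ℝ) : EReal)

lemma le_conjFn (φ : E d → ℝ) (p y : E d) : ((⟪p, y⟫ - φ y : ℝ) : EReal) ≤ conjFn φ p :=
  le_iSup (fun y : E d => ((⟪p, y⟫ - φ y : ℝ) : EReal)) y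

lemma conjFn_ne_bot (φ : E d → ℝ) (p : E d) : conjFn φ p ≠ ⊥ :=
  ne_of_gt (lt_of_lt_of_le (EReal.bot_lt_coe _) (le_conjFn φ p 0))

lemma conjFn_of_subdiff {φ : E d → ℝ} {p x : E d} (hp : p ∈ subdiffR φ x) :
    conjFn φ p = ((⟪p, x⟫ - φ x : ℝ) : EReal) := by
  refine le_antisymm (iSup_le fun y => ?_) (le_conjFn φ p x)
  rw [EReal.coe_le_coe_iff]
  have h1 : φ x + ⟪p, y - x⟫ ≤ φ y := hp y
  have h2 : ⟪p, y - x⟫ = ⟪p, y⟫ - ⟪p, x⟫ := inner_sub_right p y x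
  linarith

lemma conjFn_ne_top_of_subdiff {φ : E d → ℝ} {p x : E d} (hp : p ∈ subdiffR φ x) :
    conjFn φ p ≠ ⊤ := by
  rw [conjFn_of_subdiff hp]; exact EReal.coe_ne_top _

lemma subdiff_conjFn {φ : E d → ℝ} {p x : E d} (hp : p ∈ subdiffR φ x) (q : E d) :
    conjFn φ p + ((⟪x, q - p⟫ : ℝ) : EReal) ≤ conjFn φ q := by
  rw [conjFn_of_subdiff hp, ← EReal.coe_add]
  have h1 : ⟪p, x⟫ - φ x + ⟪x, q - p⟫ = ⟪q, x⟫ - φ x := by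
    have h2 : ⟪x, q - p⟫ = ⟪x, q⟫ - ⟪x, p⟫ := inner_sub_right x q p
    have h3 : ⟪x, q⟫ = (⟪q, x⟫ : ℝ) := real_inner_comm q x
    have h4 : ⟪x, p⟫ = (⟪p, x⟫ : ℝ) := real_inner_comm p x
    linarith
  rw [h1]
  exact le_conjFn φ q x

lemma real_le_of_conjFn {φ : E d → ℝ} {p : E d} (hp : conjFn φ p ≠ ⊤) (y : E d) :
    ⟪p, y⟫ - φ y ≤ (conjFn φ p).toReal := by
  have := le_conjFn φ p y
  rw [← EReal.coe_toReal hp (conjFn_ne_bot φ p)] at this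
  exact EReal.coe_le_coe_iff.mp this

lemma conjFn_combo (φ : E d → ℝ) {p q : E d} (hp : conjFn φ p ≠ ⊤) (hq : conjFn φ q ≠ ⊤)
    {a b : ℝ} (ha : 0 ≤ a) (hb : 0 ≤ b) (hab : a + b = 1) :
    conjFn φ (a • p + b • q) ≤
      ((a * (conjFn φ p).toReal + b * (conjFn φ q).toReal : ℝ) : EReal) := by
  refine iSup_le fun y => ?_
  rw [EReal.coe_le_coe_iff]
  have h1 := real_le_of_conjFn hp y
  have h2 := real_le_of_conjFn hq y
  have e1 : a * (⟪p, y⟫ - φ y) ≤ a * (conjFn φ p).toReal := mul_le_mul_of_nonneg_left h1 ha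
  have e2 : b * (⟪q, y⟫ - φ y) ≤ b * (conjFn φ q).toReal := mul_le_mul_of_nonneg_left h2 hb
  have e3 : a * φ y + b * φ y = φ y := by rw [← add_mul, hab, one_mul]
  have e4 : ⟪a • p + b • q, y⟫ = a * ⟪p, y⟫ + b * ⟪q, y⟫ := by
    rw [inner_add_left, real_inner_smul_left, real_inner_smul_left]
  nlinarith [e1, e2, e3, e4]

lemma convex_conjFn_dom (φ : E d → ℝ) : Convex ℝ {p : E d | conjFn φ p ≠ ⊤} := by
  intro p hp q hq a b ha hb hab
  have := conjFn_combo φ hp hq ha hb hab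
  exact ne_top_of_le_ne_top (EReal.coe_ne_top _) this

lemma convexOn_conjFn (φ : E d → ℝ) :
    ConvexOn ℝ {p : E d | conjFn φ p ≠ ⊤} (fun p => (conjFn φ p).toReal) := by
  refine ⟨convex_conjFn_dom φ, fun p hp q hq a b ha hb hab => ?_⟩
  have h := conjFn_combo φ hp hq ha hb hab
  have := EReal.toReal_le_toReal h (conjFn_ne_bot φ _) (EReal.coe_ne_top _)
  rwa [EReal.toReal_coe] at this


/-- the "bad set" on the target side: nondifferentiability points of the conjugate
plus the frontier of its domain. -/
def badSet (φ : E d → ℝ) : Set (E d) :=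
  (interior {p : E d | conjFn φ p ≠ ⊤} \
      {p : E d | DifferentiableAt ℝ (fun q => (conjFn φ q).toReal) p}) ∪
    frontier {p : E d | conjFn φ p ≠ ⊤}

lemma badSet_measurableSet (φ : E d → ℝ) : MeasurableSet (badSet φ) :=
  (isOpen_interior.measurableSet.diff (measurableSet_of_differentiableAt ℝ _)).union
    isClosed_frontier.measurableSet

lemma badSet_null (φ : E d → ℝ) : (volume : Measure (E d)) (badSet φ) = 0 := by
  apply measure_union_null
  · set F : E d → ℝ := fun q => (conjFn φ q).toReal with hF
    have hLL : LocallyLipschitzOn (interior {p : E d | conjFn φ p ≠ ⊤}) F :=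
      (convexOn_conjFn φ).locallyLipschitzOn_interior
    apply measure_null_of_locally_null
    intro p hp
    obtain ⟨K, t, ht, hK⟩ := hLL hp.1
    rw [isOpen_interior.nhdsWithin_eq hp.1] at ht
    obtain ⟨ε, hε, hballt⟩ := Metric.mem_nhds_iff.mp ht
    refine ⟨_, inter_mem_nhdsWithin _ (ball_mem_nhds p hε), ?_⟩
    have hK' : LipschitzOnWith K F (ball p ε) := hK.mono hballt
    have hdiff := hK'.ae_differentiableWithinAt_of_mem_of_real (μ := (volume : Measure (E d)))
    rw [ae_iff] at hdiff
    refine measure_mono_null (fun q hq => ?_) hdiff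
    obtain ⟨⟨hq1, hq2⟩, hq3⟩ := hq
    intro hcon
    exact hq2 ((hcon hq3).differentiableAt (isOpen_ball.mem_nhds hq3))
  · exact (convex_conjFn_dom φ).addHaar_frontier volume

lemma multi_subdiff_subset_badSet (φ : E d → ℝ) :
    {p : E d | ∃ x y : E d, x ≠ y ∧ p ∈ subdiffR φ x ∧ p ∈ subdiffR φ y} ⊆ badSet φ := by
  rintro p ⟨x, y, hxy, hpx, hpy⟩
  set F : E d → ℝ := fun q => (conjFn φ q).toReal with hFdef
  have hpC : p ∈ {p : E d | conjFn φ p ≠ ⊤} := conjFn_ne_top_of_subdiff hpx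
  by_cases hint : p ∈ interior {p : E d | conjFn φ p ≠ ⊤}
  · left
    refine ⟨hint, fun hdiff => hxy ?_⟩
    obtain ⟨ε, hε, hball⟩ := Metric.mem_nhds_iff.mp (isOpen_interior.mem_nhds hint)
    have bound : ∀ x' : E d, p ∈ subdiffR φ x' →
        ∀ q ∈ ball p ε, F p + ⟪x', q - p⟫ ≤ F q := by
      intro x' hpx' q hq
      have hqC : conjFn φ q ≠ ⊤ := interior_subset (hball hq)
      have h := subdiff_conjFn hpx' q
      rw [← EReal.coe_toReal (conjFn_ne_top_of_subdiff hpx') (conjFn_ne_bot φ p),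
        ← EReal.coe_toReal hqC (conjFn_ne_bot φ q), ← EReal.coe_add,
        EReal.coe_le_coe_iff] at h
      exact h
    exact grad_unique hε (bound x hpx) (bound y hpy) hdiff
  · right
    exact ⟨subset_closure hpC, hint⟩

end MA

open MeasureTheory

/-- Monge–Ampère equation: if `μ, ν` have positive Lebesgue densities `f, g`
and `Q = ∇ψ` (a.e. gradient selection of a convex `ψ`) pushes `μ` forward to `ν`, then the
measure `ρ_Q(A) := Leb(Q(A))` (image taken over differentiability points of `ψ`) satisfies
`ρ_Q(A) = ∫_A f(x)/g(Q(x)) dx` for every Borel set `A`. -/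
theorem statement18 {d : ℕ} (f g : E d → ℝ)
    (hf : ∀ x, 0 < f x) (hg : ∀ x, 0 < g x)
    (hfm : Measurable f) (hgm : Measurable g)
    (μ ν : Measure (E d)) [IsProbabilityMeasure μ] [IsProbabilityMeasure ν]
    (hμ : μ = (volume : Measure (E d)).withDensity (fun x => ENNReal.ofReal (f x)))
    (hν : ν = (volume : Measure (E d)).withDensity (fun x => ENNReal.ofReal (g x)))
    (ψ : E d → EReal) (hbot : ∀ x, ψ x ≠ ⊥) (hconv : ConvexE ψ)
    (Q : E d → E d) (hQm : Measurable Q) (hQ : ∀ x, Q x ∈ subdiffE ψ x)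
    (hae : ∀ᵐ x ∂(volume : Measure (E d)), subdiffE ψ x = {Q x})
    (hpush : Measure.map Q μ = ν) :
    ∀ A : Set (E d), MeasurableSet A →
      (volume : Measure (E d)) (Q '' (A ∩ {x | subdiffE ψ x = {Q x}})) =
        ∫⁻ x in A, ENNReal.ofReal (f x / g (Q x)) := by
  by_cases hss : ∀ x y : E d, x = y
  · -- subsingleton (d = 0) case
    intro A hA
    have hQid : ∀ x, Q x = x := fun x => hss _ _
    set x0 : E d := 0 with hx0
    have hDuniv : {x : E d | subdiffE ψ x = {Q x}} = Set.univ := by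
      refine Set.eq_univ_of_forall fun x => ?_
      show subdiffE ψ x = {Q x}
      apply Set.Subset.antisymm
      · intro ξ _
        exact (hss ξ (Q x) : ξ = Q x)
      · intro ξ hξ
        rw [Set.mem_singleton_iff] at hξ
        rw [hξ]
        exact hQ x
    rw [hDuniv, Set.inter_univ]
    have hQA : Q '' A = A := by
      apply Set.Subset.antisymm
      · rintro p ⟨a, ha, rfl⟩
        rwa [hQid a]
      · intro p hp
        exact ⟨p, hp, hQid p⟩
    rw [hQA]
    have hconst : ∀ (h : E d → ℝ) (x : E d), h x = h x0 := fun h x => by rw [hss x x0]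
    have huniv : ∀ (h : E d → ℝ), Measurable h →
        (volume : Measure (E d)).withDensity (fun x => ENNReal.ofReal (h x)) Set.univ =
          ENNReal.ofReal (h x0) * volume (Set.univ : Set (E d)) := by
      intro h hm
      rw [withDensity_apply _ MeasurableSet.univ, Measure.restrict_univ]
      rw [show (fun x => ENNReal.ofReal (h x)) = fun _ => ENNReal.ofReal (h x0) from
        funext fun x => by rw [hconst h x]]
      rw [lintegral_const]
    have hμuniv : (1 : ℝ≥0∞) = ENNReal.ofReal (f x0) * volume (Set.univ : Set (E d)) := by
      rw [← huniv f hfm, ← hμ]; exact measure_univ.symm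
    have hνuniv : (1 : ℝ≥0∞) = ENNReal.ofReal (g x0) * volume (Set.univ : Set (E d)) := by
      rw [← huniv g hgm, ← hν]; exact measure_univ.symm
    have hV0 : volume (Set.univ : Set (E d)) ≠ 0 := by
      intro h
      rw [h, mul_zero] at hμuniv
      exact one_ne_zero hμuniv
    have hVtop : volume (Set.univ : Set (E d)) ≠ ⊤ := by
      intro h
      rw [h] at hμuniv
      rcases eq_or_ne (ENNReal.ofReal (f x0)) 0 with h0 | h0
      · rw [h0, zero_mul] at hμuniv
        exact one_ne_zero hμuniv
      · rw [ENNReal.mul_top h0] at hμuniv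
        exact ENNReal.one_ne_top hμuniv
    have hcancel : ∀ a : ℝ≥0∞, (1 : ℝ≥0∞) = a * volume (Set.univ : Set (E d)) →
        a = (volume (Set.univ : Set (E d)))⁻¹ := by
      intro a ha
      rw [← mul_one a, ← ENNReal.mul_inv_cancel hV0 hVtop, ← mul_assoc, ← ha, one_mul]
    have heq : ENNReal.ofReal (f x0) = ENNReal.ofReal (g x0) := by
      rw [hcancel _ hμuniv, hcancel _ hνuniv]
    have hfg : f x0 = g x0 := (ENNReal.ofReal_eq_ofReal_iff (hf x0).le (hg x0).le).mp heq
    have hfg1 : ∀ x : E d, f x / g (Q x) = 1 := by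
      intro x
      rw [hconst f x, hconst g (Q x), hfg]
      exact div_self (hg x0).ne'
    rw [show (fun x : E d => ENNReal.ofReal (f x / g (Q x))) = fun _ => (1 : ℝ≥0∞) from
      funext fun x => by rw [hfg1 x, ENNReal.ofReal_one]]
    rw [setLIntegral_one]
  · -- main case
    push_neg at hss
    obtain ⟨a0, b0, hab0⟩ := hss
    have htop : ∀ x, ψ x ≠ ⊤ := by
      by_contra h
      push_neg at h
      obtain ⟨z0, hz0⟩ := h
      have halltop : ∀ y, ψ y = ⊤ := by
        intro y
        have h1 := hQ z0 y
        rw [hz0, EReal.top_add_coe] at h1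
        exact top_le_iff.mp h1
      have hsubuniv : ∀ x, subdiffE ψ x = Set.univ := by
        intro x
        refine Set.eq_univ_of_forall fun ξ => ?_
        intro y
        rw [halltop y]
        exact le_top
      have hne : ∀ x : E d, ¬ (subdiffE ψ x = {Q x}) := by
        intro x hx
        rw [hsubuniv x] at hx
        have ha : a0 ∈ ({Q x} : Set (E d)) := hx ▸ Set.mem_univ a0
        have hb : b0 ∈ ({Q x} : Set (E d)) := hx ▸ Set.mem_univ b0
        rw [Set.mem_singleton_iff] at ha hb
        exact hab0 (ha.trans hb.symm)
      rw [ae_iff] at hae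
      rw [show {x : E d | ¬ subdiffE ψ x = {Q x}} = Set.univ from
        Set.eq_univ_of_forall fun x => hne x] at hae
      exact isOpen_univ.measure_ne_zero volume Set.univ_nonempty hae
    set φ : E d → ℝ := fun x => (ψ x).toReal with hφdef
    have hψeq : ∀ x, ψ x = ((φ x : ℝ) : EReal) := fun x =>
      (EReal.coe_toReal (htop x) (hbot x)).symm
    have hsubeq : ∀ x, subdiffE ψ x = subdiffR φ x := by
      intro x
      ext ξ
      simp only [subdiffE, subdiffR, Set.mem_setOf_eq]
      constructor
      · intro h y
        have hy := h y
        rw [hψeq x, hψeq y, ← EReal.coe_add, EReal.coe_le_coe_iff] at hy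
        exact hy
      · intro h y
        rw [hψeq x, hψeq y, ← EReal.coe_add, EReal.coe_le_coe_iff]
        exact h y
    have hQsub : ∀ x, Q x ∈ subdiffR φ x := fun x => (hsubeq x) ▸ hQ x
    set N₁ : Set (E d) := MA.badSet φ with hN₁def
    have hN₁m : MeasurableSet N₁ := MA.badSet_measurableSet φ
    have hN₁null : (volume : Measure (E d)) N₁ = 0 := MA.badSet_null φ
    have hinj : Set.InjOn Q (Q ⁻¹' N₁ᶜ) := by
      intro u hu v hv huv
      by_contra hne
      have hmem : Q u ∈ {p : E d | ∃ x y : E d, x ≠ y ∧ p ∈ subdiffR φ x ∧ p ∈ subdiffR φ y} :=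
        ⟨u, v, hne, hQsub u, huv ▸ hQsub v⟩
      exact hu (MA.multi_subdiff_subset_badSet φ hmem)
    have hinvg : Measurable fun p : E d => ENNReal.ofReal (1 / g p) :=
      (measurable_const.div hgm).ennreal_ofReal
    -- the key identity for measurable sets inside `Q ⁻¹' N₁ᶜ`
    have key_eq : ∀ Z : Set (E d), MeasurableSet Z → Z ⊆ Q ⁻¹' N₁ᶜ →
        (volume : Measure (E d)) (Q '' Z) = ∫⁻ x in Z, ENNReal.ofReal (f x / g (Q x)) := by
      intro Z hZm hZsub
      have hBm : MeasurableSet (Q '' Z) := hZm.image_of_measurable_injOn hQm (hinj.mono hZsub)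
      have hpre : Q ⁻¹' (Q '' Z) = Z := by
        apply Set.Subset.antisymm
        · rintro u ⟨z, hz, hzu⟩
          have huN : u ∈ Q ⁻¹' N₁ᶜ := by
            have : Q u ∈ N₁ᶜ := by rw [← hzu]; exact hZsub hz
            exact this
          have := hinj huN (hZsub hz) hzu.symm
          rw [this]
          exact hz
        · exact Set.subset_preimage_image Q Z
      calc (volume : Measure (E d)) (Q '' Z) = ∫⁻ p in Q '' Z, 1 := (setLIntegral_one _).symm
        _ = ∫⁻ p in Q '' Z, ENNReal.ofReal (g p) * ENNReal.ofReal (1 / g p) := by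
            refine setLIntegral_congr_fun hBm (fun p _ => ?_)
            rw [← ENNReal.ofReal_mul (hg p).le, mul_one_div, div_self (hg p).ne',
              ENNReal.ofReal_one]
        _ = ∫⁻ p in Q '' Z, ENNReal.ofReal (1 / g p) ∂ν := by
            rw [hν, restrict_withDensity hBm,
              lintegral_withDensity_eq_lintegral_mul _ hgm.ennreal_ofReal hinvg]
            rfl
        _ = ∫⁻ p in Q '' Z, ENNReal.ofReal (1 / g p) ∂(Measure.map Q μ) := by rw [hpush]
        _ = ∫⁻ x in Q ⁻¹' (Q '' Z), ENNReal.ofReal (1 / g (Q x)) ∂μ :=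
            setLIntegral_map hBm hinvg hQm
        _ = ∫⁻ x in Z, ENNReal.ofReal (1 / g (Q x)) ∂μ := by rw [hpre]
        _ = ∫⁻ x in Z, ENNReal.ofReal (f x) * ENNReal.ofReal (1 / g (Q x)) := by
            have hQg : Measurable fun x : E d => ENNReal.ofReal (1 / g (Q x)) :=
              (measurable_const.div (hgm.comp hQm)).ennreal_ofReal
            rw [hμ, restrict_withDensity hZm]
            exact lintegral_withDensity_eq_lintegral_mul _ hfm.ennreal_ofReal hQg
        _ = ∫⁻ x in Z, ENNReal.ofReal (f x / g (Q x)) := by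
            refine setLIntegral_congr_fun hZm (fun x _ => ?_)
            rw [← ENNReal.ofReal_mul (hf x).le, mul_one_div]
    -- null sets on the source side
    have hνN₁ : ν N₁ = 0 := by
      rw [hν, withDensity_apply _ hN₁m, Measure.restrict_eq_zero.mpr hN₁null,
        lintegral_zero_measure]
    have hμpre : μ (Q ⁻¹' N₁) = 0 := by
      rw [← hpush, Measure.map_apply hQm hN₁m] at hνN₁
      exact hνN₁
    have hprem : MeasurableSet (Q ⁻¹' N₁) := hN₁m.preimage hQm
    have hLebpre : (volume : Measure (E d)) (Q ⁻¹' N₁) = 0 := by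
      rw [hμ, withDensity_apply _ hprem] at hμpre
      have h1 := (lintegral_eq_zero_iff hfm.ennreal_ofReal).mp hμpre
      have h2 : ∀ᵐ x ∂((volume : Measure (E d)).restrict (Q ⁻¹' N₁)), False := by
        filter_upwards [h1] with x hx
        have : f x ≤ 0 := ENNReal.ofReal_eq_zero.mp hx
        exact absurd this (not_le.mpr (hf x))
      exact Measure.restrict_eq_zero.mp (ae_eq_bot.mp (Filter.eventually_false_iff_eq_bot.mp h2))
    have hDc : (volume : Measure (E d)) {x : E d | subdiffE ψ x = {Q x}}ᶜ = 0 := by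
      rw [Set.compl_setOf]
      exact ae_iff.mp hae
    set W : Set (E d) := {x : E d | subdiffE ψ x = {Q x}}ᶜ ∪ Q ⁻¹' N₁ with hWdef
    have hW0 : (volume : Measure (E d)) W = 0 := measure_union_null hDc hLebpre
    set T : Set (E d) := (toMeasurable volume W)ᶜ with hTdef
    have hTm : MeasurableSet T := (measurableSet_toMeasurable _ _).compl
    have hTc0 : (volume : Measure (E d)) Tᶜ = 0 := by
      rw [hTdef, compl_compl, measure_toMeasurable]
      exact hW0
    have hTsub : T ⊆ {x : E d | subdiffE ψ x = {Q x}} ∩ Q ⁻¹' N₁ᶜ := by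
      intro x hx
      have hxW : x ∉ W := fun h => hx (subset_toMeasurable _ _ h)
      constructor
      · by_contra h
        exact hxW (Or.inl h)
      · intro h
        exact hxW (Or.inr h)
    intro A hA
    have hZ₀m : MeasurableSet (Tᶜ ∩ Q ⁻¹' N₁ᶜ) :=
      hTm.compl.inter (hN₁m.compl.preimage hQm)
    have hZ₀null : (volume : Measure (E d)) (Tᶜ ∩ Q ⁻¹' N₁ᶜ) = 0 :=
      measure_mono_null Set.inter_subset_left hTc0
    have hZ₀ : (volume : Measure (E d)) (Q '' (Tᶜ ∩ Q ⁻¹' N₁ᶜ)) = 0 := by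
      rw [key_eq _ hZ₀m Set.inter_subset_right, Measure.restrict_eq_zero.mpr hZ₀null,
        lintegral_zero_measure]
    have hATsub : A ∩ T ⊆ Q ⁻¹' N₁ᶜ := fun x hx => (hTsub hx.2).2
    have hQT : (volume : Measure (E d)) (Q '' (A ∩ {x : E d | subdiffE ψ x = {Q x}})) =
        (volume : Measure (E d)) (Q '' (A ∩ T)) := by
      apply le_antisymm
      · have hsub1 : Q '' (A ∩ {x : E d | subdiffE ψ x = {Q x}}) ⊆
            Q '' (A ∩ T) ∪ (Q '' (Tᶜ ∩ Q ⁻¹' N₁ᶜ) ∪ N₁) := by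
          rintro p ⟨x, hx, rfl⟩
          by_cases hQN : Q x ∈ N₁
          · exact Or.inr (Or.inr hQN)
          · by_cases hxT : x ∈ T
            · exact Or.inl ⟨x, ⟨hx.1, hxT⟩, rfl⟩
            · exact Or.inr (Or.inl ⟨x, ⟨hxT, hQN⟩, rfl⟩)
        calc (volume : Measure (E d)) (Q '' (A ∩ {x : E d | subdiffE ψ x = {Q x}}))
            ≤ (volume : Measure (E d)) (Q '' (A ∩ T) ∪ (Q '' (Tᶜ ∩ Q ⁻¹' N₁ᶜ) ∪ N₁)) :=
              measure_mono hsub1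
          _ ≤ (volume : Measure (E d)) (Q '' (A ∩ T)) +
              (volume : Measure (E d)) (Q '' (Tᶜ ∩ Q ⁻¹' N₁ᶜ) ∪ N₁) := measure_union_le _ _
          _ ≤ (volume : Measure (E d)) (Q '' (A ∩ T)) +
              ((volume : Measure (E d)) (Q '' (Tᶜ ∩ Q ⁻¹' N₁ᶜ)) +
                (volume : Measure (E d)) N₁) :=
              add_le_add_right (measure_union_le _ _) _
          _ = (volume : Measure (E d)) (Q '' (A ∩ T)) := by
              rw [hZ₀, hN₁null, add_zero, add_zero]
      · apply measure_mono
        apply Set.image_mono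
        intro x hx
        exact ⟨hx.1, (hTsub hx.2).1⟩
    have hAT_ae : (A ∩ T : Set (E d)) =ᵐ[(volume : Measure (E d))] A := by
      rw [ae_eq_set]
      refine ⟨measure_mono_null (fun x hx => absurd hx.1.1 hx.2) (measure_empty (μ := volume)), ?_⟩
      exact measure_mono_null (fun x hx => (fun h => hx.2 ⟨hx.1, h⟩ : x ∉ T)) hTc0
    have hint_eq := setLIntegral_congr
      (f := fun x : E d => ENNReal.ofReal (f x / g (Q x))) (μ := (volume : Measure (E d))) hAT_ae
    rw [hQT, key_eq (A ∩ T) (hA.inter hTm) hATsub, hint_eq]
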